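/- Let E ⊂ ℝ^d be compact and convex, K = {k₁,…,k_N} ⊂ E, G : E × E → ℝ with G ≥ ε > 0 and ‖G‖_{Lip,∞} := sup_y ‖G(·,y)‖_Lip < ∞ (Lipschitz in the ℓ¹ norm). Define Attention(q,K,K) = Σ_i [G(q,k_i)/Σ_j G(q,k_j)] k_i. Then for all q₁, q₂ ∈ E: ‖Attention(q₁,K,K) − Attention(q₂,K,K)‖₂ ≤ d^{3/2} · (2‖G‖_{Lip,∞} diam(E)/ε) · ‖q₁ − q₂‖₂. -/

import Mathlib

lemma l2_le_l1 {d : ℕ} (x : Fin d → ℝ) :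
    Real.sqrt (∑ i, x i ^ 2) ≤ ∑ i, |x i| := by
  have h : ∑ i, x i ^ 2 ≤ (∑ i, |x i|) ^ 2 := by
    calc ∑ i, x i ^ 2 = ∑ i, |x i| ^ 2 := by simp [sq_abs]
      _ ≤ (∑ i, |x i|) ^ 2 :=
        Finset.sum_sq_le_sq_sum_of_nonneg (fun i _ => abs_nonneg _)
  calc Real.sqrt (∑ i, x i ^ 2) ≤ Real.sqrt ((∑ i, |x i|) ^ 2) := Real.sqrt_le_sqrt h
    _ = ∑ i, |x i| := Real.sqrt_sq (Finset.sum_nonneg fun i _ => abs_nonneg _)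

lemma l1_le_l2 {d : ℕ} (x : Fin d → ℝ) :
    ∑ i, |x i| ≤ Real.sqrt d * Real.sqrt (∑ i, x i ^ 2) := by
  have h : (∑ i, |x i|) ^ 2 ≤ (d : ℝ) * ∑ i, x i ^ 2 := by
    have := sq_sum_le_card_mul_sum_sq (s := Finset.univ)
      (f := fun i : Fin d => |x i|)
    simpa [sq_abs] using this
  have h2 := Real.sqrt_le_sqrt h
  rwa [Real.sqrt_sq (Finset.sum_nonneg fun i _ => abs_nonneg _),
    Real.sqrt_mul (by positivity)] at h2

/-- Corollary 4.6: For `E ⊂ ℝ^d` compact convex, keys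
`k₁,…,k_N ∈ E`, `G ≥ ε > 0` with `sup_y ‖G(·,y)‖_Lip ≤ KG` (ℓ¹) and ℓ¹-diameter
of `E` at most `D`, self-attention `q ↦ Σᵢ [G(q,kᵢ)/Σⱼ G(q,kⱼ)]·kᵢ` satisfies
`‖Att(q₁) − Att(q₂)‖₂ ≤ d^{3/2}·(2·KG·D/ε)·‖q₁ − q₂‖₂`. -/
theorem stmt13 (d N : ℕ) (hN : 1 ≤ N) (E : Set (Fin d → ℝ))
    (hE : IsCompact E) (hconv : Convex ℝ E)
    (k : Fin N → Fin d → ℝ) (hk : ∀ i, k i ∈ E)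
    (G : (Fin d → ℝ) → (Fin d → ℝ) → ℝ)
    (ε : ℝ) (hε : 0 < ε) (hGε : ∀ x ∈ E, ∀ y ∈ E, ε ≤ G x y)
    (KG : ℝ) (hKG : 0 ≤ KG)
    (hGLip : ∀ y ∈ E, ∀ x ∈ E, ∀ x' ∈ E, |G x y - G x' y| ≤ KG * ∑ i, |x i - x' i|)
    (D : ℝ) (hD : ∀ x ∈ E, ∀ y ∈ E, (∑ i, |x i - y i|) ≤ D)
    (q₁ q₂ : Fin d → ℝ) (hq₁ : q₁ ∈ E) (hq₂ : q₂ ∈ E) :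
    Real.sqrt (∑ i, ((∑ j, (G q₁ (k j) / ∑ p, G q₁ (k p)) * k j i)
        - ∑ j, (G q₂ (k j) / ∑ p, G q₂ (k p)) * k j i) ^ 2)
      ≤ (d : ℝ) ^ ((3 : ℝ) / 2) * (2 * KG * D / ε)
        * Real.sqrt (∑ i, (q₁ i - q₂ i) ^ 2) := by
  set S1 := ∑ p, G q₁ (k p) with hS1def
  set S2 := ∑ p, G q₂ (k p) with hS2def
  have hNε : 0 < (N : ℝ) * ε := by
    have : (0:ℝ) < (N:ℝ) := by exact_mod_cast Nat.lt_of_lt_of_le Nat.zero_lt_one hN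
    positivity
  have hS1ge : (N : ℝ) * ε ≤ S1 := by
    rw [hS1def]
    calc (N : ℝ) * ε = ∑ _p : Fin N, ε := by simp [mul_comm]
      _ ≤ ∑ p, G q₁ (k p) := Finset.sum_le_sum fun p _ => hGε q₁ hq₁ (k p) (hk p)
  have hS2ge : (N : ℝ) * ε ≤ S2 := by
    rw [hS2def]
    calc (N : ℝ) * ε = ∑ _p : Fin N, ε := by simp [mul_comm]
      _ ≤ ∑ p, G q₂ (k p) := Finset.sum_le_sum fun p _ => hGε q₂ hq₂ (k p) (hk p)
  have hS1pos : 0 < S1 := lt_of_lt_of_le hNε hS1ge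
  have hS2pos : 0 < S2 := lt_of_lt_of_le hNε hS2ge
  set L := ∑ i, |q₁ i - q₂ i| with hLdef
  have hL0 : 0 ≤ L := Finset.sum_nonneg fun i _ => abs_nonneg _
  have hD0 : 0 ≤ D := by
    have := hD q₁ hq₁ q₁ hq₁
    simpa using this
  set c : Fin N → ℝ := fun j => G q₁ (k j) / S1 - G q₂ (k j) / S2 with hcdef
  have hΔw : ∀ j, |G q₁ (k j) - G q₂ (k j)| ≤ KG * L :=
    fun j => hGLip (k j) (hk j) q₁ hq₁ q₂ hq₂
  have hΔS : |S2 - S1| ≤ (N : ℝ) * (KG * L) := by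
    rw [hS1def, hS2def, ← Finset.sum_sub_distrib]
    calc |∑ p, (G q₂ (k p) - G q₁ (k p))| ≤ ∑ p, |G q₂ (k p) - G q₁ (k p)| :=
        Finset.abs_sum_le_sum_abs _ _
      _ ≤ ∑ _p : Fin N, KG * L := Finset.sum_le_sum fun p _ => by
          rw [abs_sub_comm]; exact hΔw p
      _ = (N : ℝ) * (KG * L) := by simp [mul_comm]
  -- bound on ∑ |c j|
  have hsumw2 : ∑ j, G q₂ (k j) / S2 = 1 := by
    rw [← Finset.sum_div, ← hS2def, div_self hS2pos.ne']
  have hc_le : ∀ j, |c j| ≤ |G q₁ (k j) - G q₂ (k j)| / S1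
      + (G q₂ (k j) / S2) * (|S2 - S1| / S1) := by
    intro j
    have hw2 : 0 ≤ G q₂ (k j) / S2 :=
      div_nonneg (le_trans hε.le (hGε q₂ hq₂ (k j) (hk j))) hS2pos.le
    have heq : c j = (G q₁ (k j) - G q₂ (k j)) / S1
        + (G q₂ (k j) / S2) * ((S2 - S1) / S1) := by
      rw [hcdef]; field_simp; ring
    rw [heq]
    have hw2' : 0 ≤ G q₂ (k j) := le_trans hε.le (hGε q₂ hq₂ (k j) (hk j))
    refine (abs_add_le _ _).trans (le_of_eq ?_)
    rw [abs_div, abs_mul, abs_div, abs_div, abs_of_pos hS1pos, abs_of_pos hS2pos,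
      abs_of_nonneg hw2']
  have hsumabs : ∑ j, |G q₁ (k j) - G q₂ (k j)| ≤ (N : ℝ) * (KG * L) := by
    calc ∑ j, |G q₁ (k j) - G q₂ (k j)| ≤ ∑ _j : Fin N, KG * L :=
        Finset.sum_le_sum fun j _ => hΔw j
      _ = (N : ℝ) * (KG * L) := by simp [mul_comm]
  have hNKL : 0 ≤ (N : ℝ) * (KG * L) := by positivity
  have hsumc : ∑ j, |c j| ≤ 2 * KG * L / ε := by
    calc ∑ j, |c j|
        ≤ ∑ j, (|G q₁ (k j) - G q₂ (k j)| / S1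
            + (G q₂ (k j) / S2) * (|S2 - S1| / S1)) :=
          Finset.sum_le_sum fun j _ => hc_le j
      _ = (∑ j, |G q₁ (k j) - G q₂ (k j)|) / S1 + |S2 - S1| / S1 := by
          rw [Finset.sum_add_distrib, ← Finset.sum_div, ← Finset.sum_mul, hsumw2, one_mul]
      _ ≤ ((N : ℝ) * (KG * L)) / S1 + ((N : ℝ) * (KG * L)) / S1 :=
          add_le_add (by gcongr) (by gcongr)
      _ = 2 * (((N : ℝ) * (KG * L)) / S1) := by ring
      _ ≤ 2 * (((N : ℝ) * (KG * L)) / ((N : ℝ) * ε)) := by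
          have := div_le_div_of_nonneg_left hNKL hNε hS1ge
          linarith
      _ = 2 * KG * L / ε := by
          have hN0 : (N : ℝ) ≠ 0 := by positivity
          field_simp
  -- vector part
  set j₀ : Fin N := ⟨0, hN⟩ with hj₀
  set u : Fin N → EuclideanSpace ℝ (Fin d) := fun j => WithLp.toLp 2 (fun i => k j i - k j₀ i)
    with hudef
  have hsumc0 : ∑ j, c j = 0 := by
    have hsumw1 : ∑ j, G q₁ (k j) / S1 = 1 := by
      rw [← Finset.sum_div, ← hS1def, div_self hS1pos.ne']
    rw [hcdef]
    rw [Finset.sum_sub_distrib, hsumw1, hsumw2, sub_self]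
  set V : EuclideanSpace ℝ (Fin d) := WithLp.toLp 2 (fun i =>
    (∑ j, (G q₁ (k j) / S1) * k j i) - ∑ j, (G q₂ (k j) / S2) * k j i) with hVdef
  have hVeq : V = ∑ j, c j • u j := by
    ext i
    have happ : (∑ j, c j • u j) i = ∑ j, c j * (k j i - k j₀ i) := by
      rw [WithLp.ofLp_sum, Finset.sum_apply]
      rfl
    rw [hVdef, happ]
    have : ∑ j, c j * (k j i - k j₀ i)
        = ∑ j, c j * k j i - (∑ j, c j) * k j₀ i := by
      rw [Finset.sum_mul, ← Finset.sum_sub_distrib]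
      congr 1; funext j; ring
    rw [this, hsumc0, zero_mul, sub_zero, hcdef]
    simp only
    rw [← Finset.sum_sub_distrib]
    congr 1; funext j; ring
  have hnormu : ∀ j, ‖u j‖ ≤ D := by
    intro j
    rw [EuclideanSpace.norm_eq]
    have h1 : ∀ i, ‖u j i‖ ^ 2 = (k j i - k j₀ i) ^ 2 := fun i => by
      simp only [hudef, Real.norm_eq_abs, sq_abs]
    simp only [h1]
    exact (l2_le_l1 fun i => k j i - k j₀ i).trans (hD (k j) (hk j) (k j₀) (hk j₀))
  have hnormV : ‖V‖ ≤ (2 * KG * L / ε) * D := by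
    rw [hVeq]
    calc ‖∑ j, c j • u j‖ ≤ ∑ j, ‖c j • u j‖ := norm_sum_le _ _
      _ = ∑ j, |c j| * ‖u j‖ := by simp [norm_smul, Real.norm_eq_abs]
      _ ≤ ∑ j, |c j| * D := Finset.sum_le_sum fun j _ =>
          mul_le_mul_of_nonneg_left (hnormu j) (abs_nonneg _)
      _ = (∑ j, |c j|) * D := by rw [Finset.sum_mul]
      _ ≤ (2 * KG * L / ε) * D := mul_le_mul_of_nonneg_right hsumc hD0
  have hLHS : Real.sqrt (∑ i, ((∑ j, (G q₁ (k j) / S1) * k j i)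
      - ∑ j, (G q₂ (k j) / S2) * k j i) ^ 2) = ‖V‖ := by
    rw [EuclideanSpace.norm_eq]
    congr 1
    refine Finset.sum_congr rfl fun i _ => ?_
    simp only [hVdef, Real.norm_eq_abs, sq_abs]
  rw [hLHS]
  set Q := Real.sqrt (∑ i, (q₁ i - q₂ i) ^ 2) with hQdef
  have hQ0 : 0 ≤ Q := Real.sqrt_nonneg _
  have hLQ : L ≤ Real.sqrt d * Q := l1_le_l2 _
  have hsqrtd : Real.sqrt d ≤ (d : ℝ) ^ ((3:ℝ)/2) := by
    rw [Real.sqrt_eq_rpow]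
    rcases Nat.eq_zero_or_pos d with hd | hd
    · subst hd; norm_num
    · have hd1 : (1:ℝ) ≤ (d:ℝ) := by exact_mod_cast hd
      exact Real.rpow_le_rpow_of_exponent_le hd1 (by norm_num)
  calc ‖V‖ ≤ (2 * KG * L / ε) * D := hnormV
    _ = (2 * KG * D / ε) * L := by ring
    _ ≤ (2 * KG * D / ε) * (Real.sqrt d * Q) := by
        gcongr
    _ ≤ (2 * KG * D / ε) * ((d : ℝ) ^ ((3:ℝ)/2) * Q) := by
        gcongr
    _ = (d : ℝ) ^ ((3:ℝ)/2) * (2 * KG * D / ε) * Q := by ring
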